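/- Let A be the 2×2 matrix [[1,−1],[−1,1]] and set M := (1/4)·A. Then M satisfies the four Moore–Penrose equations for A, namely A·M·A = A, M·A·M = M, (A·M)ᵀ = A·M, and (M·A)ᵀ = M·A. Moreover, for every integer N ≥ 2 and every real number ρ2, letting B be the (N−1)×2 matrix whose first column has all entries equal to −1 and whose second column has all entries equal to ρ2: 𝟙ᵀ · ((ρ2·J_{N−1} + (1−ρ2)·I_{N−1}) − B·M·Bᵀ) · 𝟙 = (N−1)·(1+(N−2)ρ2 − (N−1)(1+ρ2)²/4). -/

import Mathlib

open Matrix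

noncomputable section

/-- The all-ones matrix. -/
def Jmat (a b : ℕ) : Matrix (Fin a) (Fin b) ℝ := Matrix.of fun _ _ => 1

/-- The singular 2×2 matrix [[1,−1],[−1,1]]. -/
def Amat : Matrix (Fin 2) (Fin 2) ℝ := !![1, -1; -1, 1]

/-- The Moore–Penrose pseudoinverse of Amat, namely (1/4)·Amat. -/
def Mmat : Matrix (Fin 2) (Fin 2) ℝ := (1 / 4 : ℝ) • Amat

/-- The (N−1)×2 matrix whose first column is all −1 and second column all ρ2. -/
def Bmat (N : ℕ) (ρ2 : ℝ) : Matrix (Fin (N - 1)) (Fin 2) ℝ :=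
  Matrix.of fun _ j => if j = 0 then (-1 : ℝ) else ρ2

theorem stmt_17 (N : ℕ) (hN : 2 ≤ N) (ρ2 : ℝ) :
    Amat * Mmat * Amat = Amat ∧ Mmat * Amat * Mmat = Mmat ∧
    (Amat * Mmat)ᵀ = Amat * Mmat ∧ (Mmat * Amat)ᵀ = Mmat * Amat ∧
    ∑ i : Fin (N - 1), ∑ j : Fin (N - 1),
        ((ρ2 • Jmat (N - 1) (N - 1) +
            (1 - ρ2) • (1 : Matrix (Fin (N - 1)) (Fin (N - 1)) ℝ))
          - (Bmat N ρ2 * Mmat * (Bmat N ρ2)ᵀ :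
              Matrix (Fin (N - 1)) (Fin (N - 1)) ℝ)) i j
      = ((N : ℝ) - 1) *
          (1 + ((N : ℝ) - 2) * ρ2 - ((N : ℝ) - 1) * (1 + ρ2) ^ 2 / 4) := by
  refine ⟨?_, ?_, ?_, ?_, ?_⟩
  · ext i j; fin_cases i <;> fin_cases j <;>
      simp [Amat, Mmat, Matrix.mul_apply, Fin.sum_univ_two] <;> ring
  · ext i j; fin_cases i <;> fin_cases j <;>
      simp [Amat, Mmat, Matrix.mul_apply, Fin.sum_univ_two] <;> ring
  · ext i j; fin_cases i <;> fin_cases j <;>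
      simp [Amat, Mmat, Matrix.mul_apply, Fin.sum_univ_two] <;> ring
  · ext i j; fin_cases i <;> fin_cases j <;>
      simp [Amat, Mmat, Matrix.mul_apply, Fin.sum_univ_two] <;> ring
  · have hentry : ∀ i j : Fin (N - 1),
        ((ρ2 • Jmat (N - 1) (N - 1) +
            (1 - ρ2) • (1 : Matrix (Fin (N - 1)) (Fin (N - 1)) ℝ))
          - (Bmat N ρ2 * Mmat * (Bmat N ρ2)ᵀ)) i j
        = (ρ2 - (1 + ρ2) ^ 2 / 4) + (if i = j then (1 - ρ2) else 0) := by
      intro i j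
      simp [Matrix.sub_apply, Matrix.add_apply, Matrix.smul_apply, Jmat,
        Matrix.one_apply, Matrix.mul_apply, Fin.sum_univ_two, Bmat, Mmat, Amat,
        Matrix.transpose_apply]
      split <;> try ring
    simp only [hentry]
    have hcard : ((N - 1 : ℕ) : ℝ) = (N : ℝ) - 1 := by
      have : (1 : ℕ) ≤ N := le_trans (by norm_num) hN
      push_cast [Nat.cast_sub this]; ring
    rw [Finset.sum_congr rfl fun i _ => Finset.sum_add_distrib]
    rw [Finset.sum_add_distrib]
    have h1 : ∑ i : Fin (N - 1), ∑ _j : Fin (N - 1), (ρ2 - (1 + ρ2) ^ 2 / 4)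
        = ((N : ℝ) - 1) * (((N : ℝ) - 1) * (ρ2 - (1 + ρ2) ^ 2 / 4)) := by
      simp [Finset.sum_const, hcard]; try ring
    have h2 : ∑ i : Fin (N - 1), ∑ j : Fin (N - 1),
        (if i = j then (1 - ρ2) else 0) = ((N : ℝ) - 1) * (1 - ρ2) := by
      have : ∀ i : Fin (N - 1), ∑ j : Fin (N - 1),
          (if i = j then (1 - ρ2) else 0) = (1 - ρ2) := by
        intro i; simp
      simp [this, Finset.sum_const, hcard]; ring
    rw [h1, h2]; ring
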